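/- Let t be a finite tree on n vertices and fix a starting vertex u_1. Consider the random sequential process that, having selected connected vertex set {u_1,...,u_{k-1}}, selects the next vertex u_k from the neighbors of this set with probability n_{u_k}^{(u_1)} / (n - k + 1), where n_v^{(u_1)} is the size of the subtree rooted at v away from u_1. Then every history (u_1, u_2, ..., u_n) rooted at u_1 is generated with equal probability 1/#hist(t, u_1), i.e., the process samples uniformly from the histories rooted at u_1. -/

import Mathlib

open scoped Classical
open SimpleGraph Finset

variable {V : Type*}



/-- A history of a graph `G`: an ordering of all vertices (no repeats) such that
every nonempty prefix induces a connected subgraph. -/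
def IsHistory (G : SimpleGraph V) (l : List V) : Prop :=
  l.Nodup ∧ (∀ v : V, v ∈ l) ∧ ∀ k : ℕ, 1 ≤ k → (G.induce {v | v ∈ l.take k}).Connected

/-- Number of histories of `G` rooted at (i.e. starting with) `u`. -/
noncomputable def nHist (G : SimpleGraph V) (u : V) : ℕ :=
  Nat.card {l : List V // IsHistory G l ∧ l.head? = some u}

/-- Total number of histories of `G`. -/
noncomputable def nHistAll (G : SimpleGraph V) : ℕ :=
  Nat.card {l : List V // IsHistory G l}

/-- Size of the subtree of `G` rooted at `v` away from `u`: the number of vertices `w`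
such that every walk from `w` to `u` passes through `v`. -/
noncomputable def subtreeSize (G : SimpleGraph V) (u v : V) : ℕ :=
  Nat.card {w : V | ∀ p : G.Walk w u, v ∈ p.support}

namespace HistAux

variable {G : SimpleGraph V} {u : V}


variable {G : SimpleGraph V} {u : V}

lemma conn_singleton (G : SimpleGraph V) (v : V) : (G.induce {v}).Connected := by
  have : Nonempty ↥({v} : Set V) := ⟨⟨v, rfl⟩⟩
  constructor
  rintro ⟨a, ha⟩ ⟨b, hb⟩
  rcases ha; rcases hb
  rfl

lemma conn_insert {S : Set V} (hS : (G.induce S).Connected) {v w : V} (hw : w ∈ S)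
    (h : G.Adj v w) : (G.induce (insert v S)).Connected := by
  have h2 := SimpleGraph.induce_union_connected (G.induce_pair_connected_of_adj h).preconnected hS.preconnected
    ⟨w, by simp [hw]⟩
  have : ({v, w} : Set V) ∪ S = insert v S := by
    ext x; simp only [Set.mem_union, Set.mem_insert_iff, Set.mem_singleton_iff]
    constructor
    · rintro ((rfl | rfl) | hx) <;> simp [hw, *]
    · tauto
  rwa [this] at h2

lemma adj_of_conn_insert {S : Set V} {v : V} (hv : v ∉ S) (hne : S.Nonempty)
    (h : (G.induce (insert v S)).Connected) : ∃ w ∈ S, G.Adj v w := by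
  obtain ⟨s, hs⟩ := hne
  obtain ⟨p⟩ := h.preconnected ⟨v, Set.mem_insert _ _⟩ ⟨s, Set.mem_insert_of_mem _ hs⟩
  cases p with
  | nil => exact absurd hs (by simpa using hv)
  | @cons _ b _ hadj q =>
    have hb : G.Adj v (b : V) := hadj
    have : (b : V) ∈ S := by
      rcases b.2 with h' | h'
      · exact absurd (h' ▸ hb) (G.irrefl)
      · exact h'
    exact ⟨b, this, hb⟩

lemma exists_walk_in_set {S : Set V} (h : (G.induce S).Connected) {a b : V}
    (ha : a ∈ S) (hb : b ∈ S) : ∃ p : G.Walk a b, ∀ x ∈ p.support, x ∈ S := by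
  obtain ⟨q⟩ := h.preconnected ⟨a, ha⟩ ⟨b, hb⟩
  refine ⟨q.map ⟨Subtype.val, fun hadj => hadj⟩, ?_⟩
  intro x hx
  rw [SimpleGraph.Walk.support_map, List.mem_map] at hx
  obtain ⟨y, _, rfl⟩ := hx
  exact y.2



/-- subtree set -/
def st (G : SimpleGraph V) (u v : V) : Set V := {w | ∀ p : G.Walk w u, v ∈ p.support}

lemma self_mem_st (G : SimpleGraph V) (u v : V) : v ∈ st G u v :=
  fun p => p.start_mem_support

lemma mem_st_iff (hG : G.IsTree) {w v : V} (P : G.Walk w u) (hP : P.IsPath) :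
    w ∈ st G u v ↔ v ∈ P.support := by
  constructor
  · exact fun h => h P
  · intro hv q
    have hq : (q.toPath : G.Walk w u) = P :=
      (hG.existsUnique_path w u).unique q.toPath.2 hP
    exact q.support_toPath_subset (hq ▸ hv)

lemma exists_walk_in_set' {S : Set V} (h : (G.induce S).Connected) {a b : V}
    (ha : a ∈ S) (hb : b ∈ S) : ∃ p : G.Walk a b, ∀ x ∈ p.support, x ∈ S := by
  obtain ⟨q⟩ := h.preconnected ⟨a, ha⟩ ⟨b, hb⟩
  refine ⟨q.map ⟨Subtype.val, fun hadj => hadj⟩, ?_⟩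
  intro x hx
  rw [SimpleGraph.Walk.support_map, List.mem_map] at hx
  obtain ⟨y, _, rfl⟩ := hx
  exact y.2

/-- for `v ∉ S`, nothing of `S` is in the subtree of `v` (S connected containing u). -/
lemma st_subset_compl {S : Set V} (hconn : (G.induce S).Connected) (hu : u ∈ S)
    {v : V} (hv : v ∉ S) {w : V} (hw : w ∈ S) : w ∉ st G u v := by
  obtain ⟨p, hp⟩ := exists_walk_in_set' hconn hw hu
  intro hst
  exact hv (hp v (hst p))

lemma exists_boundary_aux {S : Set V} :
    ∀ {w x : V} (P : G.Walk w x), x ∈ S → w ∉ S →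
      ∃ v s, v ∉ S ∧ s ∈ S ∧ G.Adj v s ∧ v ∈ P.support := by
  intro w x P
  induction P with
  | nil => intro h1 h2; exact absurd h1 h2
  | @cons a b c hadj q ih =>
    intro hc ha
    by_cases hb : b ∈ S
    · exact ⟨a, b, ha, hb, hadj, Walk.start_mem_support _⟩
    · obtain ⟨v, s, h1, h2, h3, h4⟩ := ih hc hb
      exact ⟨v, s, h1, h2, h3, List.mem_cons_of_mem _ h4⟩

lemma exists_boundary (hG : G.IsTree) {S : Set V} (hu : u ∈ S) {w : V} (hw : w ∉ S) :
    ∃ v, v ∉ S ∧ (∃ s ∈ S, G.Adj v s) ∧ w ∈ st G u v := by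
  obtain ⟨P, hP⟩ := (hG.existsUnique_path w u).exists
  obtain ⟨v, s, h1, h2, h3, h4⟩ := exists_boundary_aux P hu hw
  exact ⟨v, h1, ⟨s, h2, h3⟩, (mem_st_iff hG P hP).2 h4⟩

lemma st_eq_of_mem_both (hG : G.IsTree) {S : Set V} (hconn : (G.induce S).Connected)
    (hu : u ∈ S) {v v' : V}
    (hv : v ∉ S) (hvs : ∃ s ∈ S, G.Adj v s) (hv' : v' ∉ S) (hvs' : ∃ s ∈ S, G.Adj v' s)
    {w : V} (hwv : w ∈ st G u v) (hwv' : w ∈ st G u v') : v = v' := by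
  classical
  obtain ⟨P, hP⟩ := (hG.existsUnique_path w u).exists
  have hvP : v ∈ P.support := hwv P
  have hv'P : v' ∈ P.support := hwv' P
  wlog hle : (P.takeUntil v hvP).length ≤ (P.takeUntil v' hv'P).length with H
  · exact (H hG hconn hu hv' hvs' hv hvs hwv' hwv P hP hv'P hvP (le_of_not_ge hle)).symm
  by_cases hmem : v' ∈ (P.takeUntil v hvP).support
  · -- then takeUntil v' is a prefix of takeUntil v, forcing v' = v by lengths
    have h1 : ((P.takeUntil v hvP).takeUntil v' hmem).IsPath := (hP.takeUntil hvP).takeUntil hmem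
    have h2 : (P.takeUntil v' hv'P).IsPath := hP.takeUntil hv'P
    have heq : (P.takeUntil v hvP).takeUntil v' hmem = P.takeUntil v' hv'P :=
      (hG.existsUnique_path w v').unique h1 h2
    have h3 : ((P.takeUntil v hvP).takeUntil v' hmem).length
        + ((P.takeUntil v hvP).dropUntil v' hmem).length = (P.takeUntil v hvP).length := by
      rw [← SimpleGraph.Walk.length_append, SimpleGraph.Walk.take_spec]
    have h5 := congrArg SimpleGraph.Walk.length heq
    have h4 : ((P.takeUntil v hvP).dropUntil v' hmem).length = 0 := by omega
    exact (SimpleGraph.Walk.eq_of_length_eq_zero h4).symm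
  · -- build a walk avoiding v'
    exfalso
    obtain ⟨s, hs, hadj⟩ := hvs
    obtain ⟨W, hW⟩ := exists_walk_in_set' hconn hs hu
    set q : G.Walk w u := (P.takeUntil v hvP).append (Walk.cons hadj W) with hq
    have hv'q : v' ∈ q.support := hwv' q
    rw [SimpleGraph.Walk.mem_support_append_iff] at hv'q
    rcases hv'q with h | h
    · exact hmem h
    · rw [SimpleGraph.Walk.support_cons] at h
      rcases List.mem_cons.1 h with rfl | h
      · exact hmem (SimpleGraph.Walk.end_mem_support _)
      · exact hv' (hW _ h)


section Fin
variable [Fintype V] {G : SimpleGraph V} {u : V}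

/-- boundary of a finset -/
noncomputable def bdry (G : SimpleGraph V) (S : Finset V) : Finset V :=
  Finset.univ.filter (fun v => v ∉ S ∧ ∃ s ∈ S, G.Adj v s)

lemma mem_bdry {S : Finset V} {v : V} :
    v ∈ bdry G S ↔ v ∉ S ∧ ∃ s ∈ S, G.Adj v s := by
  simp [bdry]

noncomputable def stF (G : SimpleGraph V) (u v : V) : Finset V :=
  (Set.toFinite (st G u v)).toFinset

lemma mem_stF {v w : V} : w ∈ stF G u v ↔ w ∈ st G u v := Set.Finite.mem_toFinset _

lemma subtreeSize_eq (G : SimpleGraph V) (u v : V) :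
    subtreeSize G u v = (stF G u v).card := by
  rw [subtreeSize, Nat.card_coe_set_eq, Set.ncard_eq_toFinset_card _ (Set.toFinite _)]
  rfl

lemma compl_eq_biUnion (hG : G.IsTree) {S : Finset V}
    (hconn : (G.induce ↑S).Connected) (hu : u ∈ S) :
    Sᶜ = (bdry G S).biUnion (stF G u) := by
  ext w
  simp only [Finset.mem_compl, Finset.mem_biUnion, mem_bdry, mem_stF]
  constructor
  · intro hw
    obtain ⟨v, hv1, hv2, hv3⟩ := exists_boundary (u := u) hG (by exact_mod_cast hu)
      (show w ∉ (↑S : Set V) from by exact_mod_cast hw)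
    exact ⟨v, ⟨by exact_mod_cast hv1, by
      obtain ⟨s, hs1, hs2⟩ := hv2; exact ⟨s, by exact_mod_cast hs1, hs2⟩⟩, hv3⟩
  · rintro ⟨v, ⟨hv1, hv2⟩, hw⟩
    intro hwS
    exact st_subset_compl (u := u) hconn (by exact_mod_cast hu) (by exact_mod_cast hv1)
      (by exact_mod_cast hwS) hw

lemma sum_subtreeSize (hG : G.IsTree) {S : Finset V}
    (hconn : (G.induce ↑S).Connected) (hu : u ∈ S) :
    ∑ v ∈ bdry G S, subtreeSize G u v = Sᶜ.card := by
  rw [compl_eq_biUnion hG hconn hu, Finset.card_biUnion]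
  · exact Finset.sum_congr rfl fun v _ => (subtreeSize_eq G u v)
  · intro v hv v' hv' hne
    rw [Finset.mem_coe, mem_bdry] at hv hv'
    rw [Function.onFun, Finset.disjoint_left]
    intro w hw hw'
    rw [mem_stF] at hw hw'
    refine hne (st_eq_of_mem_both hG hconn (by exact_mod_cast hu) ?_ ?_ ?_ ?_ hw hw')
    · exact_mod_cast hv.1
    · obtain ⟨s, h1, h2⟩ := hv.2; exact ⟨s, by exact_mod_cast h1, h2⟩
    · exact_mod_cast hv'.1
    · obtain ⟨s, h1, h2⟩ := hv'.2; exact ⟨s, by exact_mod_cast h1, h2⟩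

def Ext (G : SimpleGraph V) (S : Finset V) (l : List V) : Prop :=
  l.Nodup ∧ (∀ v, v ∈ l ↔ v ∉ S) ∧
    ∀ k : ℕ, (G.induce ((S : Set V) ∪ {x | x ∈ l.take k})).Connected

lemma ext_finite (G : SimpleGraph V) (S : Finset V) : {l : List V | Ext G S l}.Finite :=
  (List.finite_length_le V (Fintype.card V)).subset fun _ hl => hl.1.length_le_card

noncomputable def extF (G : SimpleGraph V) (S : Finset V) : Finset (List V) :=
  (ext_finite G S).toFinset

lemma mem_extF {S : Finset V} {l : List V} : l ∈ extF G S ↔ Ext G S l :=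
  Set.Finite.mem_toFinset _

lemma set_step (S : Finset V) (v : V) (l : List V) (k : ℕ) :
    ((insert v S : Finset V) : Set V) ∪ {x | x ∈ l.take k} =
      (S : Set V) ∪ {x | x ∈ (v :: l).take (k + 1)} := by
  rw [List.take_succ_cons]
  ext x
  simp only [Finset.coe_insert, Set.mem_union, Set.mem_insert_iff, Set.mem_setOf_eq,
    List.mem_cons, Finset.mem_coe]
  tauto

lemma extF_eq {S : Finset V} (hconn : (G.induce ↑S).Connected) (hne : S.Nonempty)
    (hSu : S ≠ Finset.univ) :
    extF G S = (bdry G S).biUnion (fun v => (extF G (insert v S)).image (List.cons v)) := by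
  ext l
  simp only [Finset.mem_biUnion, Finset.mem_image, mem_extF, mem_bdry]
  constructor
  · intro hl
    obtain ⟨a, ha⟩ : ∃ a, a ∉ S := by
      by_contra h
      push_neg at h
      exact hSu (Finset.eq_univ_iff_forall.2 h)
    cases l with
    | nil => exact absurd ((hl.2.1 a).2 ha) List.not_mem_nil
    | cons b t =>
      have hb : b ∉ S := (hl.2.1 b).1 List.mem_cons_self
      have hconn1 : (G.induce (insert b (S : Set V))).Connected := by
        have h1 := hl.2.2 1
        have hset : (S : Set V) ∪ {x | x ∈ (b :: t).take 1} = insert b (S : Set V) := by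
          ext x; simp [List.take_succ_cons, or_comm]
        rwa [hset] at h1
      obtain ⟨s, hs, hadj⟩ := adj_of_conn_insert (by exact_mod_cast hb)
        (hne.to_set) hconn1
      refine ⟨b, ⟨hb, s, by exact_mod_cast hs, hadj⟩, t, ⟨hl.1.of_cons, ?_, ?_⟩, rfl⟩
      · intro x
        by_cases hx : x = b
        · subst hx
          simp only [Finset.mem_insert, not_or]
          exact ⟨fun h => absurd h (List.nodup_cons.1 hl.1).1, fun h => absurd trivial h.1⟩
        · rw [Finset.mem_insert, not_or]
          constructor
          · intro h
            exact ⟨hx, (hl.2.1 x).1 (List.mem_cons_of_mem _ h)⟩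
          · rintro ⟨-, h⟩
            rcases List.mem_cons.1 ((hl.2.1 x).2 h) with rfl | h'
            · exact absurd rfl hx
            · exact h'
      · intro k
        rw [set_step]
        exact hl.2.2 (k + 1)
  · rintro ⟨v, ⟨hv1, s, hs, hadj⟩, t, ht, rfl⟩
    have hvt : v ∉ t := fun h => ((ht.2.1 v).1 h) (Finset.mem_insert_self v S)
    refine ⟨List.nodup_cons.2 ⟨hvt, ht.1⟩, ?_, ?_⟩
    · intro x
      by_cases hx : x = v
      · subst hx; simp [hv1]
      · rw [List.mem_cons]
        constructor
        · rintro (rfl | h)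
          · exact hv1
          · exact fun hxS => (ht.2.1 x).1 h (Finset.mem_insert_of_mem hxS)
        · intro h
          exact Or.inr ((ht.2.1 x).2 (fun hins => hx (by
            rcases Finset.mem_insert.1 hins with h' | h'
            · exact h'
            · exact absurd h' h)))
    · intro k
      cases k with
      | zero =>
        have hset : (S : Set V) ∪ {x | x ∈ (v :: t).take 0} = (S : Set V) := by
          simp
        rw [hset]; exact hconn
      | succ k =>
        rw [← set_step]
        exact ht.2.2 k

lemma card_extF {S : Finset V} (hconn : (G.induce ↑S).Connected) (hne : S.Nonempty)
    (hSu : S ≠ Finset.univ) :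
    (extF G S).card = ∑ v ∈ bdry G S, (extF G (insert v S)).card := by
  rw [extF_eq hconn hne hSu, Finset.card_biUnion]
  · refine Finset.sum_congr rfl fun v _ => ?_
    exact Finset.card_image_of_injective _ (fun a b h => (List.cons.injEq _ _ _ _ ▸ h).2)
  · intro v _ v' _ hne'
    rw [Function.onFun, Finset.disjoint_left]
    rintro l hl hl'
    obtain ⟨t, _, rfl⟩ := Finset.mem_image.1 hl
    obtain ⟨t', _, h⟩ := Finset.mem_image.1 hl'
    exact hne' ((List.cons.injEq _ _ _ _ ▸ h).1.symm)

lemma extF_univ (hG : G.IsTree) : extF G (Finset.univ : Finset V) = {[]} := by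
  ext l
  simp only [mem_extF, Finset.mem_singleton]
  constructor
  · intro hl
    exact List.eq_nil_iff_forall_not_mem.2 fun x hx => (hl.2.1 x).1 hx (Finset.mem_univ x)
  · rintro rfl
    refine ⟨List.nodup_nil, by simp, fun k => ?_⟩
    have hset : ((Finset.univ : Finset V) : Set V) ∪ {x | x ∈ ([] : List V).take k}
        = Set.univ := by simp
    rw [hset]
    exact (induceUnivIso G).connected_iff.2 hG.isConnected

lemma main (hG : G.IsTree) :
    ∀ (k : ℕ) (S : Finset V), u ∈ S → (G.induce ↑S).Connected → Sᶜ.card = k →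
      (extF G S).card * ∏ v ∈ Sᶜ, subtreeSize G u v = Nat.factorial k := by
  intro k
  induction k with
  | zero =>
    intro S _ _ hc
    have hS : S = Finset.univ := by
      rwa [Finset.card_eq_zero, Finset.compl_eq_empty_iff] at hc
    subst hS
    simp [extF_univ hG]
  | succ k ih =>
    intro S hu hconn hc
    have hSu : S ≠ Finset.univ := by
      intro h
      rw [h] at hc
      simp at hc
    have hne : S.Nonempty := ⟨u, hu⟩
    rw [card_extF hconn hne hSu, Finset.sum_mul]
    have hstep : ∀ v ∈ bdry G S,
        (extF G (insert v S)).card * ∏ w ∈ Sᶜ, subtreeSize G u w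
          = subtreeSize G u v * Nat.factorial k := by
      intro v hv
      rw [mem_bdry] at hv
      obtain ⟨hv1, s, hs, hadj⟩ := hv
      have hconn' : (G.induce ↑(insert v S)).Connected := by
        rw [Finset.coe_insert]
        exact conn_insert hconn (by exact_mod_cast hs) hadj
      have hv2 : v ∈ Sᶜ := Finset.mem_compl.2 hv1
      have hcard : (insert v S)ᶜ.card = k := by
        rw [Finset.compl_insert, Finset.card_erase_of_mem hv2, hc]
        rfl
      have ihv := ih (insert v S) (Finset.mem_insert_of_mem hu) hconn' hcard
      rw [Finset.compl_insert] at ihv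
      rw [← Finset.mul_prod_erase _ _ hv2, mul_left_comm, ihv]
    rw [Finset.sum_congr rfl hstep, ← Finset.sum_mul, sum_subtreeSize hG hconn hu, hc,
      Nat.factorial_succ]


lemma nHist_eq (G : SimpleGraph V) (u : V) : nHist G u = (extF G {u}).card := by
  rw [nHist, ← Nat.card_eq_finsetCard]
  refine Nat.card_congr ?_
  refine Equiv.ofBijective (fun p => ⟨p.1.tail, ?_⟩) ⟨?_, ?_⟩
  · -- tail is an extension of {u}
    obtain ⟨l, hl, hh⟩ := p
    have hcons : u :: l.tail = l := List.cons_head?_tail hh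
    rw [mem_extF]
    refine ⟨?_, ?_, ?_⟩
    · have := hl.1
      rw [← hcons] at this
      exact this.of_cons
    · intro x
      constructor
      · intro hx
        rw [Finset.mem_singleton]
        rintro rfl
        have := hl.1
        rw [← hcons] at this
        exact (List.nodup_cons.1 this).1 hx
      · intro hx
        rw [Finset.mem_singleton] at hx
        have hxl := hl.2.1 x
        rw [← hcons] at hxl
        rcases List.mem_cons.1 hxl with rfl | h
        · exact absurd rfl hx
        · exact h
    · intro k
      have h1 := hl.2.2 (k + 1) (Nat.le_add_left 1 k)
      have hset : {v | v ∈ l.take (k + 1)}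
          = ((({u} : Finset V) : Set V) ∪ {x | x ∈ l.tail.take k}) := by
        conv_lhs => rw [← hcons]
        rw [List.take_succ_cons]
        ext x
        simp [or_comm, eq_comm]
      rwa [hset] at h1
  · -- injective
    rintro ⟨l, hl, hh⟩ ⟨l', hl', hh'⟩ h
    have h1 : u :: l.tail = l := List.cons_head?_tail hh
    have h2 : u :: l'.tail = l' := List.cons_head?_tail hh'
    have h3 : l.tail = l'.tail := congrArg Subtype.val h
    apply Subtype.ext
    show l = l'
    rw [← h1, ← h2, h3]
  · -- surjective
    rintro ⟨t, ht⟩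
    rw [mem_extF] at ht
    have hut : u ∉ t := fun h => (ht.2.1 u).1 h (Finset.mem_singleton_self u)
    refine ⟨⟨u :: t, ⟨List.nodup_cons.2 ⟨hut, ht.1⟩, ?_, ?_⟩, rfl⟩, rfl⟩
    · intro v
      by_cases hv : v = u
      · subst hv; exact List.mem_cons_self
      · exact List.mem_cons_of_mem _ ((ht.2.1 v).2 (by simp [hv]))
    · intro k hk
      obtain ⟨j, rfl⟩ := Nat.exists_eq_add_of_le hk
      have h1 := ht.2.2 j
      have hset : (({u} : Finset V) : Set V) ∪ {x | x ∈ t.take j}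
          = {v | v ∈ (u :: t).take (1 + j)} := by
        rw [add_comm 1 j, List.take_succ_cons]
        ext x
        simp [or_comm, eq_comm]
      rwa [hset] at h1

lemma prod_desc (n : ℕ) : ∏ k ∈ Finset.Ico 1 n, (n - k) = Nat.factorial (n - 1) := by
  cases n with
  | zero => simp
  | succ m =>
    have h1 : ∏ k ∈ Finset.Ico 1 (m + 1), (m + 1 - k) = ∏ k ∈ Finset.Ico 1 (m + 1), k := by
      refine Finset.prod_nbij (fun k => m + 1 - k) ?_ ?_ ?_ ?_
      · intro a ha
        rw [Finset.mem_Ico] at ha ⊢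
        omega
      · intro a ha b hb hab
        simp only [Finset.coe_Ico, Set.mem_Ico] at ha hb
        dsimp only at hab
        omega
      · intro b hb
        simp only [Finset.coe_Ico, Set.mem_Ico] at hb
        refine ⟨m + 1 - b, ?_, ?_⟩
        · simp only [Finset.coe_Ico, Set.mem_Ico]; omega
        · dsimp only; omega
      · intro a _
        rfl
    rw [h1, Nat.succ_sub_one, Finset.prod_Ico_id_eq_factorial]

end Fin


end HistAux

open HistAux

theorem stmt10 [Fintype V] (G : SimpleGraph V) (hG : G.IsTree) (u : V)
    (l : List V) (hl : IsHistory G l) (hhead : l.head? = some u) :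
    ∏ k ∈ Finset.Ico 1 (Fintype.card V),
        (subtreeSize G u (l.getD k u) : ℝ) / ((Fintype.card V - k : ℕ) : ℝ) =
      1 / (nHist G u : ℝ) := by
  classical
  set n := Fintype.card V with hn
  have hcons : u :: l.tail = l := List.cons_head?_tail hhead
  have huniv : l.toFinset = Finset.univ :=
    Finset.eq_univ_iff_forall.2 fun v => List.mem_toFinset.2 (hl.2.1 v)
  have hlen : l.length = n := by
    rw [← List.toFinset_card_of_nodup hl.1, huniv, Finset.card_univ]
  have hgd : l.getD 0 u = u := by rw [← hcons]; rfl
  have hu0 : ∀ h0 : 0 < l.length, l[0] = u := fun h0 => by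
    rw [← List.getD_eq_getElem l u h0]; exact hgd
  have P1 : ∏ k ∈ Finset.Ico 1 n, (subtreeSize G u (l.getD k u) : ℝ)
      = ∏ v ∈ ({u} : Finset V)ᶜ, (subtreeSize G u v : ℝ) := by
    refine Finset.prod_nbij (fun k => l.getD k u) ?_ ?_ ?_ (fun a _ => rfl)
    · intro k hk
      rw [Finset.mem_Ico] at hk
      have hk' : k < l.length := by omega
      rw [Finset.mem_compl, Finset.mem_singleton, List.getD_eq_getElem l u hk']
      intro hEq
      have h0 : (0 : ℕ) < l.length := by omega
      have h2 : l[k] = l[0] := by rw [hEq, hu0 h0]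
      have := (hl.1.getElem_inj_iff).1 h2
      omega
    · intro a ha b hb hab
      simp only [Finset.coe_Ico, Set.mem_Ico] at ha hb
      have ha' : a < l.length := by omega
      have hb' : b < l.length := by omega
      dsimp only at hab
      rw [List.getD_eq_getElem l u ha', List.getD_eq_getElem l u hb'] at hab
      exact (hl.1.getElem_inj_iff).1 hab
    · intro v hv
      simp only [Finset.coe_compl, Finset.coe_singleton, Set.mem_compl_iff,
        Set.mem_singleton_iff] at hv
      obtain ⟨k, hk, hkv⟩ := List.mem_iff_getElem.1 (hl.2.1 v)
      have hk0 : k ≠ 0 := by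
        intro h
        subst h
        exact hv (hkv ▸ (hu0 hk).symm).symm
      refine ⟨k, ?_, ?_⟩
      · simp only [Finset.coe_Ico, Set.mem_Ico]
        omega
      · dsimp only
        rw [List.getD_eq_getElem l u hk]
        exact hkv
  have P2 : ∏ k ∈ Finset.Ico 1 n, ((n - k : ℕ) : ℝ)
      = (Nat.factorial (n - 1) : ℝ) := by
    rw [← Nat.cast_prod, prod_desc]
  have hkey : (extF G {u}).card * ∏ v ∈ ({u} : Finset V)ᶜ, subtreeSize G u v
      = Nat.factorial (n - 1) := by
    refine main (u := u) hG (n - 1) {u} (Finset.mem_singleton_self u) ?_ ?_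
    · rw [Finset.coe_singleton]
      exact conn_singleton G u
    · rw [Finset.card_compl, Finset.card_singleton]
  rw [Finset.prod_div_distrib, P1, P2, nHist_eq]
  set A := ∏ v ∈ ({u} : Finset V)ᶜ, subtreeSize G u v with hA
  set N := (extF G {u}).card with hNdef
  have hA' : ∏ v ∈ ({u} : Finset V)ᶜ, (subtreeSize G u v : ℝ) = (A : ℝ) := by
    rw [hA, Nat.cast_prod]
  rw [hA']
  have hF : Nat.factorial (n - 1) ≠ 0 := Nat.factorial_ne_zero _
  have hN : N ≠ 0 := by
    intro h
    rw [h, zero_mul] at hkey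
    exact hF hkey.symm
  rw [div_eq_div_iff (by exact_mod_cast hF) (by exact_mod_cast hN), one_mul]
  have : A * N = Nat.factorial (n - 1) := by rw [mul_comm]; exact hkey
  exact_mod_cast this
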